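/- Fix x ∈ X and e ∈ E, and suppose π₀(a|x) > 0 for all a ∈ A and p(e|x,π₀) > 0. Then the marginal importance weight equals the conditional expectation of the vanilla importance weight: w(x,e) = ∑_{a∈A} π₀(a|x,e) · w(x,a). -/
import Mathlib

open Finset

/-- Marginal embedding distribution `p(e|x,π')` of a policy `π'`. -/
noncomputable def pE {X A E : Type*} [Fintype A]
    (π' : X → A → ℝ) (φ : X → A → E → ℝ) (x : X) (e : E) : ℝ :=
  ∑ a, π' x a * φ x a e

/-- Marginal importance weight `w(x,e) = p(e|x,π)/p(e|x,π₀)`. -/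
noncomputable def wE {X A E : Type*} [Fintype A]
    (πt π₀ : X → A → ℝ) (φ : X → A → E → ℝ) (x : X) (e : E) : ℝ :=
  pE πt φ x e / pE π₀ φ x e

/-- Vanilla importance weight `w(x,a) = π(a|x)/π₀(a|x)`. -/
noncomputable def wA {X A : Type*} (πt π₀ : X → A → ℝ) (x : X) (a : A) : ℝ :=
  πt x a / π₀ x a

/-- Conditional action distribution `π₀(a|x,e)`. -/
noncomputable def condπ₀ {X A E : Type*} [Fintype A]
    (π₀ : X → A → ℝ) (φ : X → A → E → ℝ) (x : X) (a : A) (e : E) : ℝ :=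
  π₀ x a * φ x a e / pE π₀ φ x e

/-- The marginal importance weight is the conditional expectation of the
vanilla importance weight: `w(x,e) = ∑_a π₀(a|x,e)·w(x,a)`. -/
theorem marginal_weight_as_conditional_expectation
    {X A E : Type*} [Fintype X] [Fintype A] [Fintype E]
    (πt π₀ : X → A → ℝ) (φ : X → A → E → ℝ)
    (hπt : ∀ x a, 0 ≤ πt x a) (hπt1 : ∀ x, ∑ a, πt x a = 1)
    (hπ₀ : ∀ x a, 0 ≤ π₀ x a) (hπ₀1 : ∀ x, ∑ a, π₀ x a = 1)
    (hφ : ∀ x a e, 0 ≤ φ x a e) (hφ1 : ∀ x a, ∑ e, φ x a e = 1)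
    (x : X) (e : E)
    (hπ₀pos : ∀ a, 0 < π₀ x a) (hpE0 : 0 < pE π₀ φ x e) :
    wE πt π₀ φ x e = ∑ a, condπ₀ π₀ φ x a e * wA πt π₀ x a := by
  unfold wE condπ₀ wA
  rw [eq_comm]
  have h : ∀ a : A, π₀ x a * φ x a e / pE π₀ φ x e * (πt x a / π₀ x a)
      = πt x a * φ x a e / pE π₀ φ x e := by
    intro a
    rw [div_mul_div_comm, mul_comm (pE π₀ φ x e) (π₀ x a), ← div_div,
      mul_comm (π₀ x a) (φ x a e), mul_assoc, mul_div_assoc,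
      mul_div_cancel_left₀ _ (hπ₀pos a).ne']
    ring
  simp only [h]
  rw [← Finset.sum_div]
  rfl
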